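/- Let ‖·‖_* be a norm on ℝⁿ that is Fréchet differentiable on ℝⁿ∖{0}, X ⊆ ℝⁿ nonempty closed, and p(x) := dist_*(x; X). Then for x ∈ X, the set X is geometrically derivable at x if and only if p is semi-differentiable at x. Consequently, p is semi-differentiable on all of ℝⁿ if and only if X is geometrically derivable at every point of X. -/

import Mathlib

open Filter Topology Metric Set

abbrev En (n : ℕ) := EuclideanSpace ℝ (Fin n)

section aux
variable {n : ℕ} {N : En n → ℝ}

lemma N_zero (hN0 : ∀ z, N z = 0 ↔ z = 0) : N 0 = 0 := (hN0 0).2 rfl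

lemma N_neg (hNsmul : ∀ (a : ℝ) z, N (a • z) = |a| * N z) (z : En n) : N (-z) = N z := by
  have := hNsmul (-1) z
  simpa using this

lemma N_nonneg (hN0 : ∀ z, N z = 0 ↔ z = 0)
    (hNsmul : ∀ (a : ℝ) z, N (a • z) = |a| * N z)
    (hNadd : ∀ z₁ z₂, N (z₁ + z₂) ≤ N z₁ + N z₂) (z : En n) : 0 ≤ N z := by
  have h := hNadd z (-z)
  rw [add_neg_cancel, N_zero hN0, N_neg hNsmul] at h
  linarith

lemma N_upper (hN0 : ∀ z, N z = 0 ↔ z = 0)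
    (hNsmul : ∀ (a : ℝ) z, N (a • z) = |a| * N z)
    (hNadd : ∀ z₁ z₂, N (z₁ + z₂) ≤ N z₁ + N z₂) :
    ∃ C > (0:ℝ), ∀ z : En n, N z ≤ C * ‖z‖ := by
  classical
  refine ⟨(∑ i : Fin n, N (EuclideanSpace.single i 1)) + 1, ?_, fun z => ?_⟩
  · have : 0 ≤ ∑ i : Fin n, N (EuclideanSpace.single i 1) :=
      Finset.sum_nonneg fun i _ => N_nonneg hN0 hNsmul hNadd _
    linarith
  · have hz : z = ∑ i : Fin n, z i • EuclideanSpace.single i (1:ℝ) := by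
      ext j
      rw [WithLp.ofLp_sum, Finset.sum_apply]
      simp [EuclideanSpace.single_apply]
    have h1 : N z ≤ ∑ i : Fin n, N (z i • EuclideanSpace.single i (1:ℝ)) := by
      calc N z = N (∑ i : Fin n, z i • EuclideanSpace.single i (1:ℝ)) := by rw [← hz]
        _ ≤ _ := Finset.le_sum_of_subadditive N (N_zero hN0).le hNadd _ _
    have h2 : ∀ i : Fin n, N (z i • EuclideanSpace.single i (1:ℝ))
        ≤ N (EuclideanSpace.single i 1) * ‖z‖ := by
      intro i
      rw [hNsmul]
      have habs : |z i| ≤ ‖z‖ := by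
        have h := abs_real_inner_le_norm (EuclideanSpace.single i (1:ℝ)) z
        rw [EuclideanSpace.inner_single_left] at h
        simpa [EuclideanSpace.norm_single] using h
      calc |z i| * N (EuclideanSpace.single i 1)
          ≤ ‖z‖ * N (EuclideanSpace.single i 1) :=
            mul_le_mul_of_nonneg_right habs (N_nonneg hN0 hNsmul hNadd _)
        _ = N (EuclideanSpace.single i 1) * ‖z‖ := mul_comm _ _
    calc N z ≤ ∑ i, N (z i • EuclideanSpace.single i (1:ℝ)) := h1
      _ ≤ ∑ i, N (EuclideanSpace.single i 1) * ‖z‖ := Finset.sum_le_sum fun i _ => h2 i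
      _ = (∑ i, N (EuclideanSpace.single i 1)) * ‖z‖ := by rw [Finset.sum_mul]
      _ ≤ ((∑ i, N (EuclideanSpace.single i 1)) + 1) * ‖z‖ := by
          have := norm_nonneg z; nlinarith

lemma N_lip (hNsmul : ∀ (a : ℝ) z, N (a • z) = |a| * N z)
    (hNadd : ∀ z₁ z₂, N (z₁ + z₂) ≤ N z₁ + N z₂) (a b : En n) :
    |N a - N b| ≤ N (a - b) := by
  have h1 : N a ≤ N (a - b) + N b := by
    have := hNadd (a - b) b; simpa using this
  have h2 : N b ≤ N (a - b) + N a := by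
    have := hNadd (b - a) a
    rw [sub_add_cancel] at this
    have hn : N (b - a) = N (a - b) := by
      rw [show b - a = -(a - b) by abel, N_neg hNsmul]
    linarith
  rw [abs_le]; constructor <;> linarith

lemma N_cont (hN0 : ∀ z, N z = 0 ↔ z = 0)
    (hNsmul : ∀ (a : ℝ) z, N (a • z) = |a| * N z)
    (hNadd : ∀ z₁ z₂, N (z₁ + z₂) ≤ N z₁ + N z₂) : Continuous N := by
  obtain ⟨C, hC, hCle⟩ := N_upper hN0 hNsmul hNadd
  rw [Metric.continuous_iff]
  intro a ε hε
  refine ⟨ε / C, by positivity, fun b hb => ?_⟩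
  rw [Real.dist_eq]
  calc |N b - N a| ≤ N (b - a) := N_lip hNsmul hNadd b a
    _ ≤ C * ‖b - a‖ := hCle _
    _ < C * (ε / C) := by
        have : ‖b - a‖ < ε / C := by rwa [dist_eq_norm] at hb
        exact mul_lt_mul_of_pos_left this hC
    _ = ε := by field_simp

lemma N_lower (hN0 : ∀ z, N z = 0 ↔ z = 0)
    (hNsmul : ∀ (a : ℝ) z, N (a • z) = |a| * N z)
    (hNadd : ∀ z₁ z₂, N (z₁ + z₂) ≤ N z₁ + N z₂) :
    ∃ c > (0:ℝ), ∀ z : En n, c * ‖z‖ ≤ N z := by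
  rcases subsingleton_or_nontrivial (En n) with hs | hs
  · refine ⟨1, one_pos, fun z => ?_⟩
    have : z = 0 := Subsingleton.elim z 0
    simp [this, N_zero hN0]
  · have hsph : (sphere (0 : En n) 1).Nonempty := NormedSpace.sphere_nonempty.2 zero_le_one
    obtain ⟨z₀, hz₀mem, hz₀min⟩ := (isCompact_sphere (0 : En n) 1).exists_isMinOn hsph
      ((N_cont hN0 hNsmul hNadd).continuousOn)
    have hz₀ : z₀ ≠ 0 := by
      intro h
      rw [mem_sphere_zero_iff_norm, h, norm_zero] at hz₀mem
      norm_num at hz₀mem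
    have hc : 0 < N z₀ := by
      rcases lt_or_eq_of_le (N_nonneg hN0 hNsmul hNadd z₀) with h | h
      · exact h
      · exact absurd ((hN0 z₀).1 h.symm) hz₀
    refine ⟨N z₀, hc, fun z => ?_⟩
    rcases eq_or_ne z 0 with rfl | hz
    · simp [N_zero hN0]
    · have hnz : ‖z‖ ≠ 0 := norm_ne_zero_iff.2 hz
      have hmem : ‖z‖⁻¹ • z ∈ sphere (0 : En n) 1 := by
        rw [mem_sphere_zero_iff_norm, norm_smul]
        simp [abs_of_nonneg (inv_nonneg.2 (norm_nonneg z)), inv_mul_cancel₀ hnz]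
      have hthis : N z₀ ≤ ‖z‖⁻¹ * N z := by
        have h' : N z₀ ≤ N (‖z‖⁻¹ • z) := hz₀min hmem
        rwa [hNsmul, abs_of_nonneg (inv_nonneg.2 (norm_nonneg z))] at h'
      have hpos : (0:ℝ) < ‖z‖ := lt_of_le_of_ne (norm_nonneg z) (Ne.symm hnz)
      calc N z₀ * ‖z‖ ≤ (‖z‖⁻¹ * N z) * ‖z‖ := by
            exact mul_le_mul_of_nonneg_right hthis (norm_nonneg z)
        _ = N z := by field_simp
end aux
/-- Distance to `X` in the norm `N`. -/
noncomputable def distN {V : Type*} [NormedAddCommGroup V] [NormedSpace ℝ V]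
    (N : V → ℝ) (x : V) (X : Set V) : ℝ :=
  sInf ((fun y => N (x - y)) '' X)

section aux2
variable {n : ℕ} {N : En n → ℝ}

lemma distN_bddBelow (hN0 : ∀ z, N z = 0 ↔ z = 0)
    (hNsmul : ∀ (a : ℝ) z, N (a • z) = |a| * N z)
    (hNadd : ∀ z₁ z₂, N (z₁ + z₂) ≤ N z₁ + N z₂) (x : En n) (X : Set (En n)) :
    BddBelow ((fun y => N (x - y)) '' X) := by
  refine ⟨0, ?_⟩
  rintro r ⟨y, _, rfl⟩
  exact N_nonneg hN0 hNsmul hNadd _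

lemma distN_le (hN0 : ∀ z, N z = 0 ↔ z = 0)
    (hNsmul : ∀ (a : ℝ) z, N (a • z) = |a| * N z)
    (hNadd : ∀ z₁ z₂, N (z₁ + z₂) ≤ N z₁ + N z₂) {x y : En n} {X : Set (En n)}
    (hy : y ∈ X) : distN N x X ≤ N (x - y) :=
  csInf_le (distN_bddBelow hN0 hNsmul hNadd x X) ⟨y, hy, rfl⟩

lemma le_distN {x : En n} {X : Set (En n)} (hne : X.Nonempty) {c : ℝ}
    (h : ∀ y ∈ X, c ≤ N (x - y)) : c ≤ distN N x X := by
  refine le_csInf (hne.image _) ?_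
  rintro r ⟨y, hy, rfl⟩
  exact h y hy

lemma distN_nonneg (hN0 : ∀ z, N z = 0 ↔ z = 0)
    (hNsmul : ∀ (a : ℝ) z, N (a • z) = |a| * N z)
    (hNadd : ∀ z₁ z₂, N (z₁ + z₂) ≤ N z₁ + N z₂) {X : Set (En n)} (hne : X.Nonempty)
    (x : En n) : 0 ≤ distN N x X :=
  le_distN hne fun y _ => N_nonneg hN0 hNsmul hNadd _

lemma distN_self (hN0 : ∀ z, N z = 0 ↔ z = 0)
    (hNsmul : ∀ (a : ℝ) z, N (a • z) = |a| * N z)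
    (hNadd : ∀ z₁ z₂, N (z₁ + z₂) ≤ N z₁ + N z₂) {x : En n} {X : Set (En n)}
    (hx : x ∈ X) : distN N x X = 0 := by
  refine le_antisymm ?_ (distN_nonneg hN0 hNsmul hNadd ⟨x, hx⟩ x)
  have := distN_le (x := x) hN0 hNsmul hNadd hx
  simpa [sub_self, N_zero hN0] using this

lemma exists_nearest (hN0 : ∀ z, N z = 0 ↔ z = 0)
    (hNsmul : ∀ (a : ℝ) z, N (a • z) = |a| * N z)
    (hNadd : ∀ z₁ z₂, N (z₁ + z₂) ≤ N z₁ + N z₂) {X : Set (En n)}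
    (hX : IsClosed X) (hne : X.Nonempty) (x : En n) :
    ∃ y ∈ X, (∀ y' ∈ X, N (x - y) ≤ N (x - y')) ∧ distN N x X = N (x - y) := by
  obtain ⟨c, hc, hcle⟩ := N_lower hN0 hNsmul hNadd
  obtain ⟨y₀, hy₀⟩ := hne
  have hcont : Continuous fun y : En n => N (x - y) :=
    (N_cont hN0 hNsmul hNadd).comp (continuous_const.sub continuous_id)
  set K := X ∩ {y : En n | N (x - y) ≤ N (x - y₀)} with hK
  have hKc : IsClosed K := hX.inter (isClosed_le hcont continuous_const)
  have hKsub : K ⊆ closedBall x (N (x - y₀) / c) := by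
    rintro y ⟨_, hy2⟩
    rw [mem_closedBall, dist_comm, dist_eq_norm]
    have h1 : c * ‖x - y‖ ≤ N (x - y) := hcle _
    have h2 : N (x - y) ≤ N (x - y₀) := hy2
    have : ‖x - y‖ ≤ N (x - y) / c := (le_div_iff₀' hc).2 h1
    exact this.trans (by gcongr)
  have hKcpt : IsCompact K := (isCompact_closedBall x _).of_isClosed_subset hKc hKsub
  have hKne : K.Nonempty := ⟨y₀, hy₀, by simp [hK]⟩
  obtain ⟨y, hyK, hymin⟩ := hKcpt.exists_isMinOn hKne hcont.continuousOn
  have hmin : ∀ y' ∈ X, N (x - y) ≤ N (x - y') := by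
    intro y' hy'
    by_cases h : N (x - y') ≤ N (x - y₀)
    · exact hymin ⟨hy', h⟩
    · exact (hymin (show y₀ ∈ K from ⟨hy₀, by simp [hK]⟩)).trans (le_of_not_ge h)
  exact ⟨y, hyK.1, hmin, le_antisymm (distN_le hN0 hNsmul hNadd hyK.1)
    (le_distN ⟨y₀, hy₀⟩ hmin)⟩

lemma distN_lip (hN0 : ∀ z, N z = 0 ↔ z = 0)
    (hNsmul : ∀ (a : ℝ) z, N (a • z) = |a| * N z)
    (hNadd : ∀ z₁ z₂, N (z₁ + z₂) ≤ N z₁ + N z₂) {X : Set (En n)} (hne : X.Nonempty)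
    (a b : En n) : distN N a X - distN N b X ≤ N (a - b) := by
  rw [sub_le_iff_le_add]
  have : distN N a X - N (a - b) ≤ distN N b X := by
    refine le_distN hne fun y hy => ?_
    rw [sub_le_iff_le_add]
    have h1 : distN N a X ≤ N (a - y) := distN_le hN0 hNsmul hNadd hy
    have h2 : N (a - y) ≤ N (a - b) + N (b - y) := by
      have := hNadd (a - b) (b - y)
      rwa [show a - b + (b - y) = a - y by abel] at this
    linarith
  linarith

lemma distN_abs_lip (hN0 : ∀ z, N z = 0 ↔ z = 0)
    (hNsmul : ∀ (a : ℝ) z, N (a • z) = |a| * N z)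
    (hNadd : ∀ z₁ z₂, N (z₁ + z₂) ≤ N z₁ + N z₂) {X : Set (En n)} (hne : X.Nonempty)
    (a b : En n) : |distN N a X - distN N b X| ≤ N (a - b) := by
  rw [abs_le]
  constructor
  · have := distN_lip hN0 hNsmul hNadd hne b a
    rw [show b - a = -(a - b) by abel, N_neg hNsmul] at this
    linarith
  · exact distN_lip hN0 hNsmul hNadd hne a b

end aux2
section aux3
variable {n : ℕ} {N : En n → ℝ}

lemma N_convex (hNsmul : ∀ (a : ℝ) z, N (a • z) = |a| * N z)
    (hNadd : ∀ z₁ z₂, N (z₁ + z₂) ≤ N z₁ + N z₂) : ConvexOn ℝ univ N := by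
  refine ⟨convex_univ, fun x _ y _ a b ha hb hab => ?_⟩
  calc N (a • x + b • y) ≤ N (a • x) + N (b • y) := hNadd _ _
    _ = a * N x + b * N y := by rw [hNsmul, hNsmul, abs_of_nonneg ha, abs_of_nonneg hb]
    _ = a • N x + b • N y := rfl

lemma phi_hasDerivAt (hNdiff : ∀ z, z ≠ 0 → DifferentiableAt ℝ N z)
    {b : En n} (hb : b ≠ 0) (u : En n) :
    HasDerivAt (fun s : ℝ => N (s • u + b)) (fderiv ℝ N b u) 0 := by
  have h1 : HasFDerivAt N (fderiv ℝ N b) b := (hNdiff b hb).hasFDerivAt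
  have h2 : HasDerivAt (fun s : ℝ => s • u + b) u 0 := by
    simpa using ((hasDerivAt_id (0:ℝ)).smul_const u).add_const b
  have h1' : HasFDerivAt N (fderiv ℝ N b) ((0:ℝ) • u + b) := by
    rwa [zero_smul, zero_add]
  have := h1'.comp_hasDerivAt (x := (0:ℝ)) h2
  exact this

lemma phi_convex (hNsmul : ∀ (a : ℝ) z, N (a • z) = |a| * N z)
    (hNadd : ∀ z₁ z₂, N (z₁ + z₂) ≤ N z₁ + N z₂) (b u : En n) :
    ConvexOn ℝ univ (fun s : ℝ => N (s • u + b)) := by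
  have := (N_convex hNsmul hNadd).comp_affineMap
    (AffineMap.lineMap (b : En n) (b + u) : ℝ →ᵃ[ℝ] En n)
  have heq : (N ∘ (AffineMap.lineMap (b : En n) (b + u))) = fun s : ℝ => N (s • u + b) := by
    funext s
    simp [AffineMap.lineMap_apply]
  rw [heq] at this
  simpa using this

lemma fderiv_le_slope (hNsmul : ∀ (a : ℝ) z, N (a • z) = |a| * N z)
    (hNadd : ∀ z₁ z₂, N (z₁ + z₂) ≤ N z₁ + N z₂)
    (hNdiff : ∀ z, z ≠ 0 → DifferentiableAt ℝ N z)
    {b : En n} (hb : b ≠ 0) (u : En n) {t : ℝ} (ht : 0 < t) :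
    fderiv ℝ N b u ≤ (N (b + t • u) - N b) / t := by
  have h := (phi_convex hNsmul hNadd b u).le_slope_of_hasDerivAt (mem_univ 0) (mem_univ t)
    ht (phi_hasDerivAt hNdiff hb u)
  rw [slope_def_field] at h
  calc fderiv ℝ N b u ≤ (N (t • u + b) - N ((0:ℝ) • u + b)) / (t - 0) := h
    _ = (N (b + t • u) - N b) / t := by rw [zero_smul, zero_add, add_comm (t • u) b, sub_zero]

lemma slope_le_fderiv (hNsmul : ∀ (a : ℝ) z, N (a • z) = |a| * N z)
    (hNadd : ∀ z₁ z₂, N (z₁ + z₂) ≤ N z₁ + N z₂)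
    (hNdiff : ∀ z, z ≠ 0 → DifferentiableAt ℝ N z)
    {b : En n} (hb : b ≠ 0) (u : En n) {t : ℝ} (ht : 0 < t) :
    (N b - N (b - t • u)) / t ≤ fderiv ℝ N b u := by
  have h := fderiv_le_slope hNsmul hNadd hNdiff hb (-u) ht
  rw [map_neg, smul_neg, ← sub_eq_add_neg] at h
  have h2 : (N b - N (b - t • u)) / t = -((N (b - t • u) - N b) / t) := by ring
  linarith

lemma fderiv_abs_le (hN0 : ∀ z, N z = 0 ↔ z = 0)
    (hNsmul : ∀ (a : ℝ) z, N (a • z) = |a| * N z)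
    (hNadd : ∀ z₁ z₂, N (z₁ + z₂) ≤ N z₁ + N z₂)
    (hNdiff : ∀ z, z ≠ 0 → DifferentiableAt ℝ N z)
    {b : En n} (hb : b ≠ 0) (u : En n) : |fderiv ℝ N b u| ≤ N u := by
  have h1 := fderiv_le_slope hNsmul hNadd hNdiff hb u one_pos
  have h2 := slope_le_fderiv hNsmul hNadd hNdiff hb u one_pos
  rw [one_smul] at h1 h2
  have h3 : N (b + u) ≤ N b + N u := hNadd _ _
  have h4 : N (b - u) ≤ N b + N u := by
    have := hNadd b (-u)
    rwa [← sub_eq_add_neg, N_neg hNsmul] at this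
  rw [abs_le]
  constructor
  · have : (N b - N (b - u)) / 1 ≥ -N u := by rw [div_one]; linarith
    linarith
  · have : (N (b + u) - N b) / 1 ≤ N u := by rw [div_one]; linarith
    linarith
end aux3
section aux4
variable {n : ℕ} {N : En n → ℝ}

lemma slope_right (hNdiff : ∀ z, z ≠ 0 → DifferentiableAt ℝ N z)
    {b : En n} (hb : b ≠ 0) (u : En n) :
    Tendsto (fun t : ℝ => (N (b + t • u) - N b) / t) (𝓝[>] 0) (𝓝 (fderiv ℝ N b u)) := by
  have h := phi_hasDerivAt hNdiff hb u
  rw [hasDerivAt_iff_tendsto_slope] at h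
  have h2 : Tendsto (slope (fun s : ℝ => N (s • u + b)) 0) (𝓝[>] 0) (𝓝 (fderiv ℝ N b u)) :=
    h.mono_left (nhdsWithin_mono 0 fun x hx => ne_of_gt hx)
  refine h2.congr fun t => ?_
  rw [slope_def_field, zero_smul, zero_add, sub_zero, add_comm]

lemma slope_left (hNdiff : ∀ z, z ≠ 0 → DifferentiableAt ℝ N z)
    {b : En n} (hb : b ≠ 0) (u : En n) :
    Tendsto (fun t : ℝ => (N b - N (b - t • u)) / t) (𝓝[>] 0) (𝓝 (fderiv ℝ N b u)) := by
  have h := phi_hasDerivAt hNdiff hb u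
  rw [hasDerivAt_iff_tendsto_slope] at h
  have hneg : Tendsto (fun t : ℝ => -t) (𝓝[>] (0:ℝ)) (𝓝[≠] (0:ℝ)) := by
    rw [tendsto_nhdsWithin_iff]
    constructor
    · simpa using (continuous_neg.tendsto (0:ℝ)).mono_left nhdsWithin_le_nhds
    · filter_upwards [self_mem_nhdsWithin] with t ht
      exact ne_of_lt (neg_lt_zero.2 ht)
  have h2 := h.comp hneg
  refine h2.congr fun t => ?_
  show slope (fun s : ℝ => N (s • u + b)) 0 (-t) = (N b - N (b - t • u)) / t
  rw [slope_def_field, zero_smul, zero_add, sub_zero,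
    show (-t) • u + b = b - t • u by rw [neg_smul]; abel]
  ring

lemma fderiv_seq_cont (hN0 : ∀ z, N z = 0 ↔ z = 0)
    (hNsmul : ∀ (a : ℝ) z, N (a • z) = |a| * N z)
    (hNadd : ∀ z₁ z₂, N (z₁ + z₂) ≤ N z₁ + N z₂)
    (hNdiff : ∀ z, z ≠ 0 → DifferentiableAt ℝ N z)
    {zb : En n} (hzb : zb ≠ 0) {z : ℕ → En n}
    (hz : Tendsto z atTop (𝓝 zb)) {wb : En n} {w : ℕ → En n}
    (hw : Tendsto w atTop (𝓝 wb)) :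
    Tendsto (fun k => fderiv ℝ N (z k) (w k)) atTop (𝓝 (fderiv ℝ N zb wb)) := by
  obtain ⟨C, hC, hCle⟩ := N_upper hN0 hNsmul hNadd
  rw [Metric.tendsto_nhds]
  intro ε hε
  set D := fderiv ℝ N zb wb with hD
  have hcont := N_cont hN0 hNsmul hNadd
  have hr := slope_right hNdiff hzb wb
  have hl := slope_left hNdiff hzb wb
  have hev : ∀ᶠ t in 𝓝[>] (0:ℝ),
      ((N (zb + t • wb) - N zb) / t < D + ε/4 ∧ D - ε/4 < (N zb - N (zb - t • wb)) / t) := by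
    filter_upwards [hr.eventually (eventually_lt_nhds (by linarith : D < D + ε/4)),
      hl.eventually (eventually_gt_nhds (by linarith : D - ε/4 < D))] with t h1 h2
    exact ⟨h1, h2⟩
  obtain ⟨t, ⟨hts1, hts2⟩, ht⟩ := (hev.and self_mem_nhdsWithin).exists
  have hzk0 : ∀ᶠ k in atTop, z k ≠ 0 := hz.eventually_ne hzb
  have e1 : Tendsto (fun k => (N (z k + t • wb) - N (z k)) / t) atTop
      (𝓝 ((N (zb + t • wb) - N zb) / t)) :=
    (((hcont.tendsto _).comp (hz.add tendsto_const_nhds)).sub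
      ((hcont.tendsto _).comp hz)).div_const t
  have e2 : Tendsto (fun k => (N (z k) - N (z k - t • wb)) / t) atTop
      (𝓝 ((N zb - N (zb - t • wb)) / t)) :=
    (((hcont.tendsto _).comp hz).sub
      ((hcont.tendsto _).comp (hz.sub tendsto_const_nhds))).div_const t
  have e3 : Tendsto (fun k => C * ‖w k - wb‖) atTop (𝓝 0) := by
    have h0 : Tendsto (fun k => w k - wb) atTop (𝓝 (wb - wb)) := hw.sub tendsto_const_nhds
    rw [sub_self] at h0
    have := (tendsto_const_nhds (x := C)).mul h0.norm
    simpa using this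
  filter_upwards [hzk0, e1.eventually (eventually_lt_nhds hts1),
    e2.eventually (eventually_gt_nhds hts2),
    e3.eventually (eventually_lt_nhds (by linarith : (0:ℝ) < ε/2))] with k h0 h1 h2 h3
  have hbu : fderiv ℝ N (z k) wb ≤ (N (z k + t • wb) - N (z k)) / t :=
    fderiv_le_slope hNsmul hNadd hNdiff h0 wb ht
  have hbl : (N (z k) - N (z k - t • wb)) / t ≤ fderiv ℝ N (z k) wb :=
    slope_le_fderiv hNsmul hNadd hNdiff h0 wb ht
  have hbD : |fderiv ℝ N (z k) wb - D| < ε/4 := by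
    rw [abs_lt]; constructor <;> nlinarith
  have hdif : |fderiv ℝ N (z k) (w k) - fderiv ℝ N (z k) wb| < ε/2 := by
    have heq : fderiv ℝ N (z k) (w k) - fderiv ℝ N (z k) wb = fderiv ℝ N (z k) (w k - wb) := by
      rw [map_sub]
    rw [heq]
    calc |fderiv ℝ N (z k) (w k - wb)| ≤ N (w k - wb) :=
          fderiv_abs_le hN0 hNsmul hNadd hNdiff h0 _
      _ ≤ C * ‖w k - wb‖ := hCle _
      _ < ε/2 := h3
  rw [Real.dist_eq]
  calc |fderiv ℝ N (z k) (w k) - D|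
      ≤ |fderiv ℝ N (z k) (w k) - fderiv ℝ N (z k) wb| + |fderiv ℝ N (z k) wb - D| :=
        abs_sub_le _ _ _
    _ < ε/2 + ε/4 := by linarith
    _ < ε := by linarith

lemma N_semidiff_seq (hNdiff : ∀ z, z ≠ 0 → DifferentiableAt ℝ N z)
    {zb : En n} (hzb : zb ≠ 0) {t : ℕ → ℝ}
    (ht0 : ∀ k, 0 < t k) (ht : Tendsto t atTop (𝓝 0)) {wb : En n} {w : ℕ → En n}
    (hw : Tendsto w atTop (𝓝 wb)) :
    Tendsto (fun k => (N (zb + t k • w k) - N zb) / t k) atTop (𝓝 (fderiv ℝ N zb wb)) := by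
  set f' := fderiv ℝ N zb with hf'
  have hsm : Tendsto (fun k => t k • w k) atTop (𝓝 0) := by
    have := ht.smul hw
    simpa using this
  have hsmall : (fun h : En n => N (zb + h) - N zb - f' h) =o[𝓝 0] (fun h : En n => h) :=
    hasFDerivAt_iff_isLittleO_nhds_zero.mp (hNdiff zb hzb).hasFDerivAt
  have hcomp := hsmall.comp_tendsto hsm
  have hq : ∀ k, (N (zb + t k • w k) - N zb) / t k
      = (N (zb + t k • w k) - N zb - f' (t k • w k)) / t k + f' (w k) := by
    intro k
    have htk : t k ≠ 0 := (ht0 k).ne'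
    rw [map_smul, smul_eq_mul]
    field_simp
    ring
  have h1 : Tendsto (fun k => (N (zb + t k • w k) - N zb - f' (t k • w k)) / t k) atTop
      (𝓝 0) := by
    rw [Metric.tendsto_nhds]
    intro ε hε
    have hwb1 : (0:ℝ) < ‖wb‖ + 1 := by positivity
    set c := ε / (2 * (‖wb‖ + 1)) with hc
    have hcpos : 0 < c := by positivity
    have hwev : ∀ᶠ k in atTop, ‖w k‖ < ‖wb‖ + 1 :=
      hw.norm.eventually (eventually_lt_nhds (lt_add_one ‖wb‖))
    filter_upwards [hcomp.def hcpos, hwev] with k hk1 hk2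
    simp only [Function.comp_apply] at hk1
    rw [Real.dist_eq, sub_zero, abs_div, abs_of_pos (ht0 k)]
    have hns : ‖t k • w k‖ = t k * ‖w k‖ := by
      rw [norm_smul, Real.norm_eq_abs, abs_of_pos (ht0 k)]
    rw [hns] at hk1
    have step1 : |N (zb + t k • w k) - N zb - f' (t k • w k)| / t k ≤ c * ‖w k‖ := by
      rw [div_le_iff₀ (ht0 k)]
      calc |N (zb + t k • w k) - N zb - f' (t k • w k)| ≤ c * (t k * ‖w k‖) := hk1
        _ = c * ‖w k‖ * t k := by ring
    calc |N (zb + t k • w k) - N zb - f' (t k • w k)| / t k ≤ c * ‖w k‖ := step1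
      _ ≤ c * (‖wb‖ + 1) := by
          exact mul_le_mul_of_nonneg_left hk2.le hcpos.le
      _ = ε / 2 := by
          rw [hc]
          have hne : (‖wb‖ + 1) ≠ 0 := hwb1.ne'
          field_simp
      _ < ε := by linarith
  have h2 : Tendsto (fun k => f' (w k)) atTop (𝓝 (f' wb)) :=
    (f'.continuous.tendsto wb).comp hw
  have := h1.add h2
  rw [zero_add] at this
  exact this.congr fun k => (hq k).symm
end aux4
/-- Semi-differentiability with semi-derivative `g`. -/
def HasSemiDerivAt {V W : Type*} [NormedAddCommGroup V] [NormedSpace ℝ V]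
    [NormedAddCommGroup W] [NormedSpace ℝ W] (F : V → W) (x : V) (g : V → W) : Prop :=
  ∀ w, Filter.Tendsto (fun p : ℝ × V => (p.1)⁻¹ • (F (x + p.1 • p.2) - F x))
    ((𝓝[>] (0:ℝ)) ×ˢ 𝓝 w) (𝓝 (g w))

/-- Bouligand tangent cone. -/
def tanCone {V : Type*} [NormedAddCommGroup V] [NormedSpace ℝ V] (X : Set V) (x : V) : Set V :=
  {w | ∃ t : ℕ → ℝ, ∃ v : ℕ → V, (∀ k, 0 < t k) ∧ Filter.Tendsto t Filter.atTop (𝓝 0) ∧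
    Filter.Tendsto v Filter.atTop (𝓝 w) ∧ ∀ k, x + t k • v k ∈ X}

/-- Geometric derivability at a point: every tangent vector is realized by a curve in `X`
emanating from `x` with prescribed right derivative. -/
def geomDerivableAt {V : Type*} [NormedAddCommGroup V] [NormedSpace ℝ V]
    (X : Set V) (x : V) : Prop :=
  ∀ w ∈ tanCone X x, ∃ ε > (0:ℝ), ∃ ζ : ℝ → V, (∀ t ∈ Set.Icc (0:ℝ) ε, ζ t ∈ X) ∧ ζ 0 = x ∧
    Filter.Tendsto (fun t => t⁻¹ • (ζ t - x)) (𝓝[>] (0:ℝ)) (𝓝 w)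

section aux5
variable {n : ℕ} {N : En n → ℝ}

lemma distN_cont (hN0 : ∀ z, N z = 0 ↔ z = 0)
    (hNsmul : ∀ (a : ℝ) z, N (a • z) = |a| * N z)
    (hNadd : ∀ z₁ z₂, N (z₁ + z₂) ≤ N z₁ + N z₂) {X : Set (En n)} (hne : X.Nonempty) :
    Continuous fun z => distN N z X := by
  obtain ⟨C, hC, hCle⟩ := N_upper hN0 hNsmul hNadd
  rw [Metric.continuous_iff]
  intro a ε hε
  refine ⟨ε / C, by positivity, fun b hb => ?_⟩
  rw [Real.dist_eq]
  calc |distN N b X - distN N a X| ≤ N (b - a) := distN_abs_lip hN0 hNsmul hNadd hne b a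
    _ ≤ C * ‖b - a‖ := hCle _
    _ < C * (ε / C) := by
        have : ‖b - a‖ < ε / C := by rwa [dist_eq_norm] at hb
        exact mul_lt_mul_of_pos_left this hC
    _ = ε := by field_simp

lemma zero_mem_tanCone {X : Set (En n)} {x : En n} (hx : x ∈ X) : (0 : En n) ∈ tanCone X x := by
  refine ⟨fun k => 1 / (k + 1), fun _ => 0, fun k => by positivity,
    tendsto_one_div_add_atTop_nhds_zero_nat, tendsto_const_nhds, fun k => by simpa using hx⟩

lemma geom_of_semideriv (hN0 : ∀ z, N z = 0 ↔ z = 0)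
    (hNsmul : ∀ (a : ℝ) z, N (a • z) = |a| * N z)
    (hNadd : ∀ z₁ z₂, N (z₁ + z₂) ≤ N z₁ + N z₂)
    {X : Set (En n)} (hX : IsClosed X) (hne : X.Nonempty) {x : En n} (hx : x ∈ X)
    (h : ∃ g, HasSemiDerivAt (fun z => distN N z X) x g) : geomDerivableAt X x := by
  classical
  obtain ⟨c, hc, hcle⟩ := N_lower hN0 hNsmul hNadd
  obtain ⟨g, hg⟩ := h
  intro w hw
  obtain ⟨t, v, htpos, ht, hv, hmem⟩ := hw
  have hpx : distN N x X = 0 := distN_self hN0 hNsmul hNadd hx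
  have hseq : Tendsto (fun k => (t k, v k)) atTop ((𝓝[>] (0:ℝ)) ×ˢ 𝓝 w) := by
    refine Tendsto.prodMk ?_ hv
    rw [tendsto_nhdsWithin_iff]
    exact ⟨ht, Eventually.of_forall htpos⟩
  have h0 := (hg w).comp hseq
  have hval : ∀ k, ((fun p : ℝ × En n =>
      (p.1)⁻¹ • (distN N (x + p.1 • p.2) X - distN N x X)) ∘ fun k => (t k, v k)) k = 0 := by
    intro k
    simp only [Function.comp_apply]
    rw [hpx, distN_self hN0 hNsmul hNadd (hmem k)]
    simp
  have hgw : g w = 0 := by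
    have hconst : Tendsto (fun _ : ℕ => (0:ℝ)) atTop (𝓝 (g w)) := h0.congr hval
    exact tendsto_nhds_unique hconst tendsto_const_nhds
  have hdir : Tendsto (fun s : ℝ => s⁻¹ * distN N (x + s • w) X) (𝓝[>] 0) (𝓝 0) := by
    have hmap : Tendsto (fun s : ℝ => (s, w)) (𝓝[>] (0:ℝ)) ((𝓝[>] (0:ℝ)) ×ˢ 𝓝 w) :=
      tendsto_id.prodMk tendsto_const_nhds
    have h2 := (hg w).comp hmap
    rw [hgw] at h2
    refine h2.congr fun s => ?_
    simp [hpx, smul_eq_mul]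
  choose Y hY1 hY2 hY3 using exists_nearest hN0 hNsmul hNadd hX hne
  set ζ : ℝ → En n := fun s => if s = 0 then x else Y (x + s • w) with hζ
  refine ⟨1, one_pos, ζ, ?_, by simp [hζ], ?_⟩
  · intro s hs
    by_cases h0 : s = 0
    · simp [hζ, h0, hx]
    · simp only [hζ, h0, if_false]
      exact hY1 _
  · rw [← tendsto_sub_nhds_zero_iff]
    refine squeeze_zero_norm'
      (a := fun s : ℝ => c⁻¹ * (s⁻¹ * distN N (x + s • w) X)) ?_ ?_
    · filter_upwards [self_mem_nhdsWithin] with s hs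
      have hs0 : s ≠ 0 := ne_of_gt hs
      have hζs : ζ s = Y (x + s • w) := by simp [hζ, hs0]
      set q := x + s • w with hq
      have heq : s⁻¹ • (ζ s - x) - w = -(s⁻¹ • (q - Y q)) := by
        rw [hζs, hq]
        rw [smul_sub, smul_sub, smul_add, smul_smul, inv_mul_cancel₀ hs0, one_smul]
        abel
      rw [heq, norm_neg, norm_smul, Real.norm_eq_abs, abs_of_pos (inv_pos.2 hs)]
      have hb : ‖q - Y q‖ ≤ c⁻¹ * N (q - Y q) := by
        have h1 : ‖q - Y q‖ ≤ N (q - Y q) / c := (le_div_iff₀' hc).2 (hcle _)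
        rwa [div_eq_inv_mul] at h1
      calc s⁻¹ * ‖q - Y q‖ ≤ s⁻¹ * (c⁻¹ * N (q - Y q)) := by
            exact mul_le_mul_of_nonneg_left hb (inv_pos.2 hs).le
        _ = c⁻¹ * (s⁻¹ * distN N q X) := by rw [← hY3 q]; ring
    · have := (tendsto_const_nhds (x := c⁻¹)).mul hdir
      simpa using this
end aux5
section aux6
variable {n : ℕ} {N : En n → ℝ}

lemma smul_trick {V : Type*} [AddCommGroup V] [Module ℝ V] {s : ℝ} (hs : s ≠ 0)
    (a b u : V) : u - s⁻¹ • (b - a) = s⁻¹ • (a + s • u - b) := by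
  rw [smul_sub, smul_sub, smul_add, smul_smul, inv_mul_cancel₀ hs, one_smul]
  abel

lemma semideriv_of_geom (hN0 : ∀ z, N z = 0 ↔ z = 0)
    (hNsmul : ∀ (a : ℝ) z, N (a • z) = |a| * N z)
    (hNadd : ∀ z₁ z₂, N (z₁ + z₂) ≤ N z₁ + N z₂)
    {X : Set (En n)} (hX : IsClosed X) (hne : X.Nonempty) {x : En n} (hx : x ∈ X)
    (hgeom : geomDerivableAt X x) :
    HasSemiDerivAt (fun z => distN N z X) x (fun w => distN N w (tanCone X x)) := by
  classical
  obtain ⟨C, hC, hCle⟩ := N_upper hN0 hNsmul hNadd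
  obtain ⟨c, hc, hcle⟩ := N_lower hN0 hNsmul hNadd
  have hcont := N_cont hN0 hNsmul hNadd
  choose Y hY1 hY2 hY3 using exists_nearest hN0 hNsmul hNadd hX hne
  have hpx : distN N x X = 0 := distN_self hN0 hNsmul hNadd hx
  have hTne : (tanCone X x).Nonempty := ⟨0, zero_mem_tanCone hx⟩
  intro w
  rw [tendsto_iff_seq_tendsto]
  intro u hu
  set t : ℕ → ℝ := fun k => (u k).1 with hts
  set w' : ℕ → En n := fun k => (u k).2 with hw's
  have ht : Tendsto t atTop (𝓝[>] 0) := tendsto_fst.comp hu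
  have hw' : Tendsto w' atTop (𝓝 w) := tendsto_snd.comp hu
  have ht0 : Tendsto t atTop (𝓝 0) := ht.mono_right nhdsWithin_le_nhds
  have htpos : ∀ᶠ k in atTop, 0 < t k := ht self_mem_nhdsWithin
  have hw'b : ∀ᶠ k in atTop, ‖w' k‖ < ‖w‖ + 1 :=
    hw'.norm.eventually (eventually_lt_nhds (lt_add_one _))
  apply tendsto_of_subseq_tendsto
  intro ns hns
  obtain ⟨φ, hφmono, hφ⟩ :=
    extraction_of_eventually_atTop ((hns.eventually htpos).and (hns.eventually hw'b))
  set m : ℕ → ℕ := fun k => ns (φ k) with hms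
  have hm : Tendsto m atTop atTop := hns.comp hφmono.tendsto_atTop
  set q : ℕ → En n := fun k => x + t (m k) • w' (m k) with hqs
  set v : ℕ → En n := fun k => (t (m k))⁻¹ • (Y (q k) - x) with hvs
  have hmk_pos : ∀ k, 0 < t (m k) := fun k => (hφ k).1
  have hmk_b : ∀ k, ‖w' (m k)‖ < ‖w‖ + 1 := fun k => (hφ k).2
  have hq_sub : ∀ k, q k - x = t (m k) • w' (m k) := fun k => add_sub_cancel_left x _
  have hvb : ∀ k, v k ∈ closedBall (0 : En n) (2 * c⁻¹ * (C * (‖w‖ + 1))) := by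
    intro k
    rw [mem_closedBall_zero_iff]
    have h1 : N (q k - Y (q k)) ≤ N (q k - x) := by
      rw [← hY3 (q k)]
      exact distN_le hN0 hNsmul hNadd hx
    have h2 : N (q k - x) = t (m k) * N (w' (m k)) := by
      rw [hq_sub k, hNsmul, abs_of_pos (hmk_pos k)]
    have h3 : N (Y (q k) - x) ≤ 2 * (t (m k) * N (w' (m k))) := by
      have ha := hNadd (Y (q k) - q k) (q k - x)
      rw [show Y (q k) - q k + (q k - x) = Y (q k) - x by abel] at ha
      have hb : N (Y (q k) - q k) = N (q k - Y (q k)) := by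
        rw [show Y (q k) - q k = -(q k - Y (q k)) by abel, N_neg hNsmul]
      linarith
    have h4 : ‖Y (q k) - x‖ ≤ c⁻¹ * N (Y (q k) - x) := by
      have := (le_div_iff₀' hc).2 (hcle (Y (q k) - x))
      rwa [div_eq_inv_mul] at this
    have h5 : N (w' (m k)) ≤ C * (‖w‖ + 1) := by
      calc N (w' (m k)) ≤ C * ‖w' (m k)‖ := hCle _
        _ ≤ C * (‖w‖ + 1) := mul_le_mul_of_nonneg_left (hmk_b k).le hC.le
    have htk := hmk_pos k
    calc ‖v k‖ = (t (m k))⁻¹ * ‖Y (q k) - x‖ := by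
          rw [hvs]
          rw [norm_smul, Real.norm_eq_abs, abs_of_pos (inv_pos.2 htk)]
      _ ≤ (t (m k))⁻¹ * (c⁻¹ * (2 * (t (m k) * N (w' (m k))))) := by
          refine mul_le_mul_of_nonneg_left (h4.trans ?_) (inv_pos.2 htk).le
          exact mul_le_mul_of_nonneg_left h3 (inv_pos.2 hc).le
      _ = 2 * c⁻¹ * N (w' (m k)) := by field_simp
      _ ≤ 2 * c⁻¹ * (C * (‖w‖ + 1)) := by
          refine mul_le_mul_of_nonneg_left h5 ?_
          positivity
  obtain ⟨vb, _, ψ, hψmono, hψ⟩ :=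
    tendsto_subseq_of_bounded (isBounded_closedBall
      (x := (0 : En n)) (r := 2 * c⁻¹ * (C * (‖w‖ + 1)))) hvb
  refine ⟨φ ∘ ψ, ?_⟩
  have hmψ : Tendsto (fun k => m (ψ k)) atTop atTop := hm.comp hψmono.tendsto_atTop
  have htψ0 : Tendsto (fun k => t (m (ψ k))) atTop (𝓝 0) := ht0.comp hmψ
  have hw'ψ : Tendsto (fun k => w' (m (ψ k))) atTop (𝓝 w) := hw'.comp hmψ
  have hvψ : Tendsto (fun k => v (ψ k)) atTop (𝓝 vb) := hψ
  have hYmem : ∀ k, x + t (m (ψ k)) • v (ψ k) ∈ X := by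
    intro k
    have hsm : t (m (ψ k)) • v (ψ k) = Y (q (ψ k)) - x := by
      rw [hvs, smul_smul, mul_inv_cancel₀ (hmk_pos (ψ k)).ne', one_smul]
    rw [hsm, show x + (Y (q (ψ k)) - x) = Y (q (ψ k)) by abel]
    exact hY1 _
  have hvbT : vb ∈ tanCone X x :=
    ⟨fun k => t (m (ψ k)), fun k => v (ψ k), fun k => hmk_pos (ψ k), htψ0, hvψ, hYmem⟩
  have hval' : ∀ k, N (w' (m k) - v k) = (t (m k))⁻¹ * distN N (q k) X := by
    intro k
    have hs0 : t (m k) ≠ 0 := (hmk_pos k).ne'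
    have heq : w' (m k) - v k = (t (m k))⁻¹ • (q k - Y (q k)) :=
      smul_trick hs0 x (Y (q k)) (w' (m k))
    rw [heq, hNsmul, abs_of_pos (inv_pos.2 (hmk_pos k)), hY3 (q k)]
  have hval : ∀ k, (fun p : ℝ × En n =>
      (p.1)⁻¹ • (distN N (x + p.1 • p.2) X - distN N x X)) (u (m (ψ k)))
      = N (w' (m (ψ k)) - v (ψ k)) := by
    intro k
    show (t (m (ψ k)))⁻¹ • (distN N (x + t (m (ψ k)) • w' (m (ψ k))) X - distN N x X)
      = N (w' (m (ψ k)) - v (ψ k))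
    rw [hpx, sub_zero, smul_eq_mul, hval' (ψ k)]
  have hlim : Tendsto (fun k => N (w' (m (ψ k)) - v (ψ k))) atTop (𝓝 (N (w - vb))) :=
    (hcont.tendsto _).comp (hw'ψ.sub hψ)
  have hgoal_eq : N (w - vb) = distN N w (tanCone X x) := by
    refine le_antisymm ?_ (distN_le hN0 hNsmul hNadd hvbT)
    refine le_distN hTne fun vv hvv => ?_
    obtain ⟨ε, hε, ζ, hζX, hζ0, hζt⟩ := hgeom vv hvv
    have htψ : Tendsto (fun k => t (m (ψ k))) atTop (𝓝[>] 0) := ht.comp hmψ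
    have hζcomp : Tendsto (fun k => (t (m (ψ k)))⁻¹ • (ζ (t (m (ψ k))) - x)) atTop (𝓝 vv) :=
      hζt.comp htψ
    have hupper : ∀ᶠ k in atTop, N (w' (m (ψ k)) - v (ψ k))
        ≤ N (w' (m (ψ k)) - (t (m (ψ k)))⁻¹ • (ζ (t (m (ψ k))) - x)) := by
      have hsmall : ∀ᶠ k in atTop, t (m (ψ k)) ≤ ε :=
        htψ0.eventually (eventually_le_nhds hε)
      filter_upwards [hsmall] with k hk
      have hs := hmk_pos (ψ k)
      have hs0 : t (m (ψ k)) ≠ 0 := hs.ne'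
      have hzmem : ζ (t (m (ψ k))) ∈ X := hζX _ ⟨hs.le, hk⟩
      have hB : distN N (q (ψ k)) X ≤ N (q (ψ k) - ζ (t (m (ψ k)))) :=
        distN_le hN0 hNsmul hNadd hzmem
      have hC2 : (t (m (ψ k)))⁻¹ * N (q (ψ k) - ζ (t (m (ψ k))))
          = N (w' (m (ψ k)) - (t (m (ψ k)))⁻¹ • (ζ (t (m (ψ k))) - x)) := by
        have h1 : (t (m (ψ k)))⁻¹ * N (q (ψ k) - ζ (t (m (ψ k))))
            = N ((t (m (ψ k)))⁻¹ • (q (ψ k) - ζ (t (m (ψ k))))) := by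
          rw [hNsmul, abs_of_pos (inv_pos.2 hs)]
        rw [h1]
        exact congrArg N (smul_trick hs0 x (ζ (t (m (ψ k)))) (w' (m (ψ k)))).symm
      calc N (w' (m (ψ k)) - v (ψ k)) = (t (m (ψ k)))⁻¹ * distN N (q (ψ k)) X := hval' (ψ k)
        _ ≤ (t (m (ψ k)))⁻¹ * N (q (ψ k) - ζ (t (m (ψ k)))) :=
            mul_le_mul_of_nonneg_left hB (inv_pos.2 hs).le
        _ = _ := hC2
    have hupperlim : Tendsto
        (fun k => N (w' (m (ψ k)) - (t (m (ψ k)))⁻¹ • (ζ (t (m (ψ k))) - x))) atTop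
        (𝓝 (N (w - vv))) := (hcont.tendsto _).comp (hw'ψ.sub hζcomp)
    exact le_of_tendsto_of_tendsto hlim hupperlim hupper
  have hfin : Tendsto (fun k => (fun p : ℝ × En n =>
      (p.1)⁻¹ • (distN N (x + p.1 • p.2) X - distN N x X)) (u (m (ψ k)))) atTop
      (𝓝 (N (w - vb))) := hlim.congr fun k => (hval k).symm
  rw [hgoal_eq] at hfin
  exact hfin
end aux6
section aux7
variable {n : ℕ} {N : En n → ℝ}

lemma semideriv_of_not_mem (hN0 : ∀ z, N z = 0 ↔ z = 0)
    (hNsmul : ∀ (a : ℝ) z, N (a • z) = |a| * N z)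
    (hNadd : ∀ z₁ z₂, N (z₁ + z₂) ≤ N z₁ + N z₂)
    (hNdiff : ∀ z, z ≠ 0 → DifferentiableAt ℝ N z)
    {X : Set (En n)} (hX : IsClosed X) (hne : X.Nonempty) {x : En n} (hx : x ∉ X) :
    ∃ g, HasSemiDerivAt (fun z => distN N z X) x g := by
  classical
  obtain ⟨C, hC, hCle⟩ := N_upper hN0 hNsmul hNadd
  obtain ⟨c, hc, hcle⟩ := N_lower hN0 hNsmul hNadd
  have hcont := N_cont hN0 hNsmul hNadd
  have hpcont := distN_cont hN0 hNsmul hNadd hne (X := X)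
  choose Y hY1 hY2 hY3 using exists_nearest hN0 hNsmul hNadd hX hne
  set S : Set (En n) := {y | y ∈ X ∧ N (x - y) = distN N x X} with hS
  set p : En n → ℝ := fun z => distN N z X with hp
  have hpx : 0 < p x := by
    rcases lt_or_eq_of_le (distN_nonneg hN0 hNsmul hNadd hne x) with h | h
    · exact h
    · exfalso
      have h2 : N (x - Y x) = 0 := by rw [← hY3 x, ← h]
      have h3 : x - Y x = 0 := (hN0 _).1 h2
      have : x = Y x := by
        have := sub_eq_zero.1 h3; exact this
      rw [this] at hx
      exact hx (hY1 x)
  have hSne : S.Nonempty := ⟨Y x, hY1 x, (hY3 x).symm⟩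
  have hSne0 : ∀ y ∈ S, x - y ≠ 0 := by
    intro y hy h
    rw [hS] at hy
    have : N (x - y) = 0 := by rw [h, N_zero hN0]
    rw [hy.2] at this
    rw [hp] at hpx
    linarith
  refine ⟨fun w => sInf ((fun y => fderiv ℝ N (x - y) w) '' S), ?_⟩
  intro w
  have hbdd : BddBelow ((fun y => fderiv ℝ N (x - y) w) '' S) := by
    refine ⟨-N w, ?_⟩
    rintro r ⟨y, hy, rfl⟩
    have := fderiv_abs_le hN0 hNsmul hNadd hNdiff (hSne0 y hy) w
    rw [abs_le] at this
    exact this.1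
  set L : ℝ := sInf ((fun y => fderiv ℝ N (x - y) w) '' S) with hL
  rw [tendsto_iff_seq_tendsto]
  intro u hu
  set t : ℕ → ℝ := fun k => (u k).1 with hts
  set w' : ℕ → En n := fun k => (u k).2 with hw's
  have ht : Tendsto t atTop (𝓝[>] 0) := tendsto_fst.comp hu
  have hw' : Tendsto w' atTop (𝓝 w) := tendsto_snd.comp hu
  have ht0 : Tendsto t atTop (𝓝 0) := ht.mono_right nhdsWithin_le_nhds
  have htpos : ∀ᶠ k in atTop, 0 < t k := ht self_mem_nhdsWithin
  set q : ℕ → En n := fun j => x + t j • w' j with hqs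
  set y : ℕ → En n := fun j => Y (q j) with hys
  have hqx : Tendsto q atTop (𝓝 x) := by
    have h1 : Tendsto (fun j => t j • w' j) atTop (𝓝 0) := by
      have := ht0.smul hw'
      simpa using this
    have h2 := (tendsto_const_nhds (x := x)).add h1
    simpa using h2
  have hqlim : Tendsto (fun j => p (q j)) atTop (𝓝 (p x)) := (hpcont.tendsto x).comp hqx
  have hNq0 : Tendsto (fun j => N (q j - x)) atTop (𝓝 0) := by
    have h1 : Tendsto (fun j => q j - x) atTop (𝓝 0) := by
      have := hqx.sub (tendsto_const_nhds (x := x))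
      simpa using this
    have h2 := (hcont.tendsto 0).comp h1
    rwa [N_zero hN0] at h2
  set e : ℕ → ℝ := fun j => N (x - y j) with hes
  have he_near : ∀ j, |e j - p (q j)| ≤ N (q j - x) := by
    intro j
    have h1 : e j ≤ N (x - q j) + N (q j - y j) := by
      have := hNadd (x - q j) (q j - y j)
      rwa [show x - q j + (q j - y j) = x - y j by abel] at this
    have h2 : p (q j) ≤ N (q j - x) + e j := by
      have h3 : N (q j - y j) ≤ N (q j - x) + N (x - y j) := by
        have := hNadd (q j - x) (x - y j)
        rwa [show q j - x + (x - y j) = q j - y j by abel] at this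
      have h4 : p (q j) = N (q j - y j) := hY3 (q j)
      rw [h4]; exact h3
    have h5 : N (x - q j) = N (q j - x) := by
      rw [show x - q j = -(q j - x) by abel, N_neg hNsmul]
    have h6 : p (q j) = N (q j - y j) := hY3 (q j)
    rw [abs_le]
    constructor
    · linarith
    · rw [h6]; linarith
  have he_lim : Tendsto e atTop (𝓝 (p x)) := by
    have h2 : Tendsto (fun j => e j - p (q j)) atTop (𝓝 0) :=
      squeeze_zero_norm (fun j => by rw [Real.norm_eq_abs]; exact he_near j) hNq0
    have h3 := h2.add hqlim
    simpa using h3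
  have hehalf : ∀ᶠ j in atTop, p x / 2 < e j :=
    he_lim.eventually (eventually_gt_nhds (half_lt_self hpx))
  have hebound : ∀ᶠ j in atTop, e j < p x + 1 :=
    he_lim.eventually (eventually_lt_nhds (lt_add_one _))
  apply tendsto_of_subseq_tendsto
  intro ns hns
  obtain ⟨φ, hφmono, hφ⟩ := extraction_of_eventually_atTop
    (((hns.eventually htpos).and (hns.eventually hehalf)).and (hns.eventually hebound))
  set m : ℕ → ℕ := fun k => ns (φ k) with hms
  have hm : Tendsto m atTop atTop := hns.comp hφmono.tendsto_atTop
  have hmk_pos : ∀ k, 0 < t (m k) := fun k => (hφ k).1.1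
  have hmk_ne : ∀ k, x - y (m k) ≠ 0 := by
    intro k h
    have h2 : p x / 2 < e (m k) := (hφ k).1.2
    have h1 : e (m k) = 0 := by
      show N (x - y (m k)) = 0
      rw [h, N_zero hN0]
    rw [h1] at h2
    linarith
  have hmem : ∀ k, y (m k) ∈ closedBall x (c⁻¹ * (p x + 1)) := by
    intro k
    rw [mem_closedBall, dist_eq_norm]
    have h1 : c * ‖x - y (m k)‖ ≤ e (m k) := hcle _
    have h2 : e (m k) < p x + 1 := (hφ k).2
    have h3 : ‖y (m k) - x‖ = ‖x - y (m k)‖ := norm_sub_rev _ _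
    rw [h3]
    have h4 : ‖x - y (m k)‖ ≤ (p x + 1) / c := (le_div_iff₀' hc).2 (h1.trans h2.le)
    rwa [div_eq_inv_mul] at h4
  obtain ⟨yb, _, ψ, hψmono, hψ⟩ := tendsto_subseq_of_bounded
    (isBounded_closedBall (x := x) (r := c⁻¹ * (p x + 1))) hmem
  refine ⟨φ ∘ ψ, ?_⟩
  set J : ℕ → ℕ := fun k => m (ψ k) with hJs
  have hJtop : Tendsto J atTop atTop := hm.comp hψmono.tendsto_atTop
  have hyJ : Tendsto (fun k => y (J k)) atTop (𝓝 yb) := hψ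
  have hybX : yb ∈ X := hX.mem_of_tendsto hyJ (Eventually.of_forall fun k => hY1 _)
  have heJ : Tendsto (fun k => e (J k)) atTop (𝓝 (p x)) := he_lim.comp hJtop
  have heJ2 : Tendsto (fun k => e (J k)) atTop (𝓝 (N (x - yb))) := by
    have h1 : Tendsto (fun k => x - y (J k)) atTop (𝓝 (x - yb)) := tendsto_const_nhds.sub hyJ
    exact (hcont.tendsto _).comp h1
  have hybS : yb ∈ S := ⟨hybX, tendsto_nhds_unique heJ2 heJ⟩
  have hybne := hSne0 yb hybS
  have htJpos : ∀ k, 0 < t (J k) := fun k => hmk_pos (ψ k)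
  have htJ0 : Tendsto (fun k => t (J k)) atTop (𝓝 0) := ht0.comp hJtop
  have hw'J : Tendsto (fun k => w' (J k)) atTop (𝓝 w) := hw'.comp hJtop
  set a : ℕ → ℝ := fun k => (p (q (J k)) - p x) / t (J k) with has
  set b : ℕ → ℝ := fun k => fderiv ℝ N (x - y (J k)) (w' (J k)) with hbs
  have hlow : ∀ k, b k ≤ a k := by
    intro k
    have hs := htJpos k
    have h1 : fderiv ℝ N (x - y (J k)) (w' (J k))
        ≤ (N ((x - y (J k)) + t (J k) • w' (J k)) - N (x - y (J k))) / t (J k) :=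
      fderiv_le_slope hNsmul hNadd hNdiff (hmk_ne (ψ k)) _ hs
    have h2 : (x - y (J k)) + t (J k) • w' (J k) = q (J k) - y (J k) := by
      show _ = x + t (J k) • w' (J k) - y (J k)
      abel
    have h3 : N (q (J k) - y (J k)) = p (q (J k)) := (hY3 _).symm
    have h4 : p x ≤ N (x - y (J k)) := distN_le hN0 hNsmul hNadd (hY1 _)
    rw [h2, h3] at h1
    refine h1.trans ?_
    show (p (q (J k)) - N (x - y (J k))) / t (J k) ≤ (p (q (J k)) - p x) / t (J k)
    gcongr
  have hblim : Tendsto b atTop (𝓝 (fderiv ℝ N (x - yb) w)) :=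
    fderiv_seq_cont hN0 hNsmul hNadd hNdiff hybne (tendsto_const_nhds.sub hyJ) hw'J
  have hupp : ∀ y' ∈ S, ∀ k, a k
      ≤ (N ((x - y') + t (J k) • w' (J k)) - N (x - y')) / t (J k) := by
    intro y' hy' k
    have hs := htJpos k
    have h1 : p (q (J k)) ≤ N (q (J k) - y') := distN_le hN0 hNsmul hNadd hy'.1
    have h2 : (x - y') + t (J k) • w' (J k) = q (J k) - y' := by
      show _ = x + t (J k) • w' (J k) - y'
      abel
    have h3 : N (x - y') = p x := hy'.2
    show (p (q (J k)) - p x) / t (J k) ≤ _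
    rw [h2, h3]
    gcongr
  have hupplim : ∀ y' ∈ S, Tendsto
      (fun k => (N ((x - y') + t (J k) • w' (J k)) - N (x - y')) / t (J k)) atTop
      (𝓝 (fderiv ℝ N (x - y') w)) := by
    intro y' hy'
    exact N_semidiff_seq hNdiff (hSne0 y' hy') htJpos htJ0 hw'J
  have halim : Tendsto a atTop (𝓝 (fderiv ℝ N (x - yb) w)) :=
    tendsto_of_tendsto_of_tendsto_of_le_of_le hblim (hupplim yb hybS) hlow (hupp yb hybS)
  have hLle : L ≤ fderiv ℝ N (x - yb) w := csInf_le hbdd ⟨yb, hybS, rfl⟩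
  have hleL : fderiv ℝ N (x - yb) w ≤ L := by
    refine le_csInf (hSne.image _) ?_
    rintro r ⟨y', hy', rfl⟩
    exact le_of_tendsto_of_tendsto' halim (hupplim y' hy') (hupp y' hy')
  have hLeq : fderiv ℝ N (x - yb) w = L := le_antisymm hleL hLle
  have haval : ∀ k, (fun pr : ℝ × En n =>
      (pr.1)⁻¹ • (distN N (x + pr.1 • pr.2) X - distN N x X)) (u (J k)) = a k := by
    intro k
    show (t (J k))⁻¹ • (distN N (x + t (J k) • w' (J k)) X - distN N x X) = a k
    rw [smul_eq_mul, inv_mul_eq_div]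
  have hfin : Tendsto (fun k => (fun pr : ℝ × En n =>
      (pr.1)⁻¹ • (distN N (x + pr.1 • pr.2) X - distN N x X)) (u (J k))) atTop (𝓝 L) := by
    rw [← hLeq]
    exact halim.congr fun k => (haval k).symm
  exact hfin
end aux7

/-- For a Fréchet smooth norm `N = ‖·‖_*` and a nonempty closed set `X`: at any `x ∈ X`,
`X` is geometrically derivable at `x` iff `p = dist_*(·;X)` is semi-differentiable at `x`;
consequently `p` is semi-differentiable on all of `ℝⁿ` iff `X` is geometrically derivable at
every point of `X`. -/
theorem stmt10 {n : ℕ} (N : En n → ℝ)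
    (hN0 : ∀ z, N z = 0 ↔ z = 0)
    (hNsmul : ∀ (a : ℝ) z, N (a • z) = |a| * N z)
    (hNadd : ∀ z₁ z₂, N (z₁ + z₂) ≤ N z₁ + N z₂)
    (hNdiff : ∀ z, z ≠ 0 → DifferentiableAt ℝ N z)
    (X : Set (En n)) (hX : IsClosed X) (hne : X.Nonempty) :
    (∀ x ∈ X, (geomDerivableAt X x ↔ ∃ g, HasSemiDerivAt (fun z => distN N z X) x g)) ∧
    ((∀ x : En n, ∃ g, HasSemiDerivAt (fun z => distN N z X) x g) ↔
      ∀ x ∈ X, geomDerivableAt X x) := by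
  constructor
  · intro x hx
    constructor
    · intro hgeom
      exact ⟨_, semideriv_of_geom hN0 hNsmul hNadd hX hne hx hgeom⟩
    · intro h
      exact geom_of_semideriv hN0 hNsmul hNadd hX hne hx h
  · constructor
    · intro h x hx
      exact geom_of_semideriv hN0 hNsmul hNadd hX hne hx (h x)
    · intro h x
      by_cases hx : x ∈ X
      · exact ⟨_, semideriv_of_geom hN0 hNsmul hNadd hX hne hx (h x hx)⟩
      · exact semideriv_of_not_mem hN0 hNsmul hNadd hNdiff hX hne hx
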